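/- Third-case tie-breaking: Under the partition setup, suppose S[i..] < S[j..], the suffixes agree on their first c characters, i+c = PSA[v] and j+c = PSA[w] for indices v, w ≤ k. Then v < w, and consequently the marker comparison #_v < #_w decides W'_{word(i)}[position(i)..] < W'_{word(j)}[position(j)..]. -/

import Mathlib

/-- Suffix of the extended string `S` (length `n`, sentinel `S n = 0`) starting at `i`,
as a list of characters. -/
def sfx (S : ℕ → ℕ) (n i : ℕ) : List ℕ :=
  (List.range (n + 1 - i)).map (fun t => S (i + t))

/-- `S` is a string of length `n` over a positive alphabet with the unique smallest
sentinel `0` appended at position `n`. -/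
def Sentinel (S : ℕ → ℕ) (n : ℕ) : Prop :=
  S n = 0 ∧ ∀ i < n, 0 < S i

/-- `SA` is the suffix array of `S` on positions `0..n`: a bijection of `{0,…,n}`
listing the suffixes in strictly increasing lexicographic order. -/
def IsSuffixArray (S : ℕ → ℕ) (n : ℕ) (SA : ℕ → ℕ) : Prop :=
  Set.BijOn SA (Set.Iic n) (Set.Iic n) ∧
  ∀ i j : ℕ, i ≤ n → j ≤ n → i < j →
    List.Lex (· < ·) (sfx S n (SA i)) (sfx S n (SA j))

/-- `Ω(j) = max({-1} ∪ {t ∈ PSA : t ≤ PSA[j]-1})`, where `PSA = SA[0..k]`. -/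
def Omega (SA : ℕ → ℕ) (k j : ℕ) : ℤ :=
  (insert (-1 : ℤ)
    (((Finset.range (k+1)).filter (fun t => SA t < SA j)).image
      (fun t => (SA t : ℤ)))).max' (Finset.insert_nonempty _ _)

/-- Character of `S` at an integer position: positions `-1` and `n` carry the
sentinel `0` (written `$`), characters of `Σ` are positive. -/
def Sc (S : ℕ → ℕ) (n : ℕ) (q : ℤ) : ℤ :=
  if 0 ≤ q ∧ q < n then (S q.toNat : ℤ) else 0

/-- `BWT(S)[i] = S[SA[i]-1]` with `S[-1] = $`. -/
def bwtS (S : ℕ → ℕ) (n : ℕ) (SA : ℕ → ℕ) (i : ℕ) : ℤ :=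
  Sc S n ((SA i : ℤ) - 1)

/-- The word `W_j = S[Ω(j) .. PSA[j]-1]` as a list of characters. -/
def wordList (S : ℕ → ℕ) (n : ℕ) (SA : ℕ → ℕ) (k j : ℕ) : List ℤ :=
  (List.range ((SA j : ℤ) - Omega SA k j).toNat).map
    (fun t => Sc S n (Omega SA k j + t))

/-- The marked word `W'_j = W_j · #_j`, where the distinct markers are encoded as
`#_j = j - (k+1)`, so that `#_0 < … < #_k < $ = 0 < Σ`. -/
def wordM (S : ℕ → ℕ) (n : ℕ) (SA : ℕ → ℕ) (k j : ℕ) : List ℤ :=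
  wordList S n SA k j ++ [(j : ℤ) - (k + 1)]

/-- A position `q ∈ {0,…,n}` of `S` viewed in `{-1,…,n-1}`: position `n` is
identified with `-1` (first right rotation). -/
def posZ (n q : ℕ) : ℤ := if q = n then -1 else (q : ℤ)

/-- `SAW`/`DAW` form the (suffix array, document array) pair for the collection
`Wc 0, …, Wc (l-1)`: the `i`-th lexicographically smallest of the `m` suffixes of
the collection is `(Wc (DAW i)).drop (SAW i)`. -/
def IsMSA (Wc : ℕ → List ℤ) (l m : ℕ) (SAW DAW : ℕ → ℕ) : Prop :=
  (∀ i < m, DAW i < l ∧ SAW i < (Wc (DAW i)).length) ∧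
  (∀ j < l, ∀ p < (Wc j).length, ∃! i, i < m ∧ DAW i = j ∧ SAW i = p) ∧
  ∀ i j : ℕ, i < m → j < m → i < j →
    List.Lex (· < ·) ((Wc (DAW i)).drop (SAW i)) ((Wc (DAW j)).drop (SAW j))

/-- Multi-string BWT: the character cyclically preceding the `i`-th smallest
suffix within its word. -/
def bwtW (Wc : ℕ → List ℤ) (SAW DAW : ℕ → ℕ) (i : ℕ) : ℤ :=
  (Wc (DAW i)).getD ((SAW i + (Wc (DAW i)).length - 1) % (Wc (DAW i)).length) 0


section Aux

lemma lex_asymm {α : Type*} [LinearOrder α] {l1 l2 : List α}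
    (h1 : List.Lex (· < ·) l1 l2) (h2 : List.Lex (· < ·) l2 l1) : False := by
  induction h1 with
  | nil => cases h2
  | @cons a l₁ l₂ h ih =>
      cases h2 with
      | cons h' => exact ih h'
      | rel h' => exact lt_irrefl _ h'
  | @rel a l₁ b l₂ h =>
      cases h2 with
      | cons h' => exact absurd rfl (ne_of_gt h)
      | rel h' => exact lt_irrefl _ (h.trans h')

lemma lex_append {α : Type*} {r : α → α → Prop} (P : List α) {l1 l2 : List α}
    (h : List.Lex r l1 l2) : List.Lex r (P ++ l1) (P ++ l2) := by
  induction P with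
  | nil => simpa using h
  | cons a P ih => exact List.Lex.cons ih

lemma sfx_cons (S : ℕ → ℕ) (n i : ℕ) (hi : i ≤ n) :
    sfx S n i = S i :: sfx S n (i + 1) := by
  have h1 : n + 1 - i = (n - i) + 1 := by omega
  have h2 : n + 1 - (i + 1) = n - i := by omega
  rw [sfx, sfx, h1, h2, List.range_succ_eq_map, List.map_cons, List.map_map]
  congr 1
  apply List.map_congr_left
  intro a _
  simp [Nat.succ_eq_add_one]; ring_nf

lemma sfx_strip (S : ℕ → ℕ) (n : ℕ) (c : ℕ) : ∀ i j : ℕ, i + c ≤ n → j + c ≤ n →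
    (∀ b < c, S (i + b) = S (j + b)) →
    (List.Lex (· < ·) (sfx S n i) (sfx S n j) ↔
      List.Lex (· < ·) (sfx S n (i + c)) (sfx S n (j + c))) := by
  induction c with
  | zero => intro i j _ _ _; rfl
  | succ c ih =>
      intro i j hi hj hag
      have e0 : S i = S j := by simpa using hag 0 (Nat.succ_pos c)
      rw [sfx_cons S n i (by omega), sfx_cons S n j (by omega), e0,
        List.lex_cons_iff]
      have := ih (i+1) (j+1) (by omega) (by omega)
        (fun b hb => by
          have := hag (b+1) (by omega)
          simpa [Nat.add_assoc, Nat.add_comm 1 b] using this)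
      rw [this]
      have e1 : i + 1 + c = i + (c+1) := by omega
      have e2 : j + 1 + c = j + (c+1) := by omega
      rw [e1, e2]

lemma omega_ge_neg_one (SA : ℕ → ℕ) (k j : ℕ) : (-1 : ℤ) ≤ Omega SA k j :=
  Finset.le_max' _ _ (Finset.mem_insert_self _ _)

lemma omega_ge (SA : ℕ → ℕ) (k j t : ℕ) (ht : t ≤ k) (h : SA t < SA j) :
    (SA t : ℤ) ≤ Omega SA k j := by
  apply Finset.le_max' _ _
  apply Finset.mem_insert_of_mem
  exact Finset.mem_image_of_mem _ (Finset.mem_filter.2 ⟨Finset.mem_range.2 (by omega), h⟩)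

lemma map_coeM (f : ℤ → ℤ) (L : ℕ) :
    List.map f ((List.range L).flatMap fun a => [(a:ℤ)]) =
      List.map (fun t : ℕ => f t) (List.range L) := by
  induction L with
  | zero => rfl
  | succ m ih => rw [List.range_succ]; simp_all

lemma wordList_eq (S : ℕ → ℕ) (n : ℕ) (SA : ℕ → ℕ) (k j : ℕ) :
    wordList S n SA k j = (List.range ((SA j : ℤ) - Omega SA k j).toNat).map
      (fun t : ℕ => Sc S n (Omega SA k j + (t:ℤ))) := by
  rw [wordList]
  show List.map _ (List.flatMap (fun a : ℕ => [(a:ℤ)]) (List.range _)) = _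
  generalize List.range _ = l; induction l <;> simp_all

lemma wordM_drop (S : ℕ → ℕ) (n : ℕ) (SA : ℕ → ℕ) (k wi i : ℕ)
    (hΩ : Omega SA k wi ≤ (i : ℤ)) (hi : i < SA wi) (hn : SA wi ≤ n) :
    (wordM S n SA k wi).drop ((i : ℤ) - Omega SA k wi).toNat =
      (List.range (SA wi - i)).map (fun s => (S (i + s) : ℤ)) ++ [(wi : ℤ) - (k + 1)] := by
  set o := Omega SA k wi with ho
  have h1 : (-1 : ℤ) ≤ o := omega_ge_neg_one SA k wi
  set p := ((i : ℤ) - o).toNat with hp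
  have hop : o + p = (i : ℤ) := by omega
  have hL : ((SA wi : ℤ) - o).toNat = p + (SA wi - i) := by omega
  have hsplit : wordList S n SA k wi =
      (List.range p).map (fun t : ℕ => Sc S n (o + t)) ++
      (List.range (SA wi - i)).map (fun s : ℕ => Sc S n (o + ((p + s : ℕ) : ℤ))) := by
    rw [wordList_eq, ← ho, hL, List.range_add, List.map_append, List.map_map]
    rfl
  have hlen : ((List.range p).map (fun t : ℕ => Sc S n (o + t))).length = p := by simp
  rw [wordM, hsplit, List.append_assoc, List.drop_left' hlen]
  congr 1
  apply List.map_congr_left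
  intro a ha
  have ha' : a < SA wi - i := List.mem_range.1 ha
  have e : o + ((p + a : ℕ) : ℤ) = ((i + a : ℕ) : ℤ) := by push_cast; omega
  rw [e, Sc, if_pos (by constructor <;> [positivity; (push_cast; omega)])]
  norm_cast

lemma map_range_split (f : ℕ → ℤ) (d b : ℕ) (h : b ≤ d) :
    (List.range d).map f = (List.range b).map f ++
      (List.range (d-b)).map (fun s => f (b+s)) := by
  conv_lhs => rw [show d = b + (d-b) by omega]
  rw [List.range_add, List.map_append, List.map_map]
  rfl

lemma lex_head_lt {x y : ℕ} {l1 l2 : List ℕ}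
    (h : List.Lex (· < ·) (x :: l1) (y :: l2)) (hne : x ≠ y) : x < y := by
  cases h with
  | rel h => exact h
  | cons h => exact absurd rfl hne

lemma lex_cons_single {x y : ℕ} {l1 : List ℕ}
    (h : List.Lex (· < ·) (x :: l1) [y]) : x < y := by
  cases h with
  | rel h => exact h
  | cons h => cases h

lemma map_range_cons (f : ℕ → ℤ) (d : ℕ) (h : 0 < d) :
    (List.range d).map f = f 0 :: (List.range (d-1)).map (fun s => f (s+1)) := by
  conv_lhs => rw [show d = (d-1)+1 by omega]
  rw [List.range_succ_eq_map, List.map_cons, List.map_map]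
  congr 1

end Aux

/-- third-case tie-breaking: if `S[i..] < S[j..]`, the suffixes
agree on their first `c` characters, and `i+c = PSA[v]`, `j+c = PSA[w]` with
`v, w ≤ k`, then `v < w`, and the marker comparison decides
`W'_{word(i)}[position(i)..] < W'_{word(j)}[position(j)..]`. -/
theorem third_case_tie_breaking (S SA : ℕ → ℕ) (n k : ℕ) (hk : k < n)
    (hS : Sentinel S n) (hSA : IsSuffixArray S n SA)
    (i j c v w : ℕ) (hv : v ≤ k) (hw : w ≤ k)
    (hiv : i + c = SA v) (hjw : j + c = SA w)
    (hagree : ∀ b < c, S (i + b) = S (j + b))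
    (hlt : List.Lex (· < ·) (sfx S n i) (sfx S n j))
    (wi wj : ℕ) (hwi : wi ≤ k) (hwj : wj ≤ k)
    (hii : Omega SA k wi ≤ posZ n i ∧ posZ n i ≤ (SA wi : ℤ) - 1)
    (hjj : Omega SA k wj ≤ posZ n j ∧ posZ n j ≤ (SA wj : ℤ) - 1) :
    v < w ∧
    List.Lex (· < ·)
      ((wordM S n SA k wi).drop (posZ n i - Omega SA k wi).toNat)
      ((wordM S n SA k wj).drop (posZ n j - Omega SA k wj).toNat) := by
  have hkn : k ≤ n := le_of_lt hk
  have hmap : ∀ t, t ≤ n → SA t ≤ n := fun t ht => hSA.1.1 (Set.mem_Iic.2 ht)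
  have reflect : ∀ t u : ℕ, t ≤ n → u ≤ n →
      List.Lex (· < ·) (sfx S n (SA t)) (sfx S n (SA u)) → t < u := by
    intro t u ht hu hL
    by_contra hc
    push_neg at hc
    rcases eq_or_lt_of_le hc with he | hlt'
    · subst he; exact lex_asymm hL hL
    · exact lex_asymm hL (hSA.2 u t hu ht hlt')
  have hSAvn : SA v ≤ n := hmap v (by omega)
  have hSAwn : SA w ≤ n := hmap w (by omega)
  have hin : i ≤ n := by omega
  have hjn : j ≤ n := by omega
  -- part 1 : v < w
  have hvw : v < w := by
    have h0 : List.Lex (· < ·) (sfx S n (i + c)) (sfx S n (j + c)) :=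
      (sfx_strip S n c i j (by omega) (by omega) hagree).mp hlt
    rw [hiv, hjw] at h0
    exact reflect v w (by omega) (by omega) h0
  refine ⟨hvw, ?_⟩
  -- j ≠ n
  have hjne : j ≠ n := by
    intro hje
    rw [hje] at hlt
    have hnil : sfx S n (n+1) = [] := by simp [sfx]
    rw [sfx_cons S n i hin, sfx_cons S n n le_rfl, hnil] at hlt
    have := lex_cons_single hlt
    rw [hS.1] at this
    omega
  have hjlt : j < n := lt_of_le_of_ne hjn hjne
  have hposj : posZ n j = (j : ℤ) := by simp [posZ, hjne]
  have hSAwjn : SA wj ≤ n := hmap wj (by omega)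
  have hdj1 : j < SA wj := by
    have := hjj.2; rw [hposj] at this; omega
  set dj : ℕ := SA wj - j with hdjdef
  have hΩj : Omega SA k wj ≤ (j : ℤ) := by rw [← hposj]; exact hjj.1
  have Rj : (wordM S n SA k wj).drop (posZ n j - Omega SA k wj).toNat =
      (List.range dj).map (fun s => (S (j + s) : ℤ)) ++ [(wj : ℤ) - (k + 1)] := by
    rw [hposj]; exact wordM_drop S n SA k wj j hΩj hdj1 hSAwjn
  rw [Rj]
  set fB : ℕ → ℤ := fun s => (S (j + s) : ℤ) with hfB
  by_cases hi_n : i = n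
  · -- i = n : first character of word suffix of i is Sc(-1) = 0 < S j
    have hposi : posZ n i = (-1 : ℤ) := by simp [posZ, hi_n]
    have hΩi : Omega SA k wi = (-1 : ℤ) := by
      have h1 := hii.1
      rw [hposi] at h1
      exact le_antisymm h1 (omega_ge_neg_one SA k wi)
    rw [hposi, hΩi]
    have hdr0 : ((-1 : ℤ) - (-1)).toNat = 0 := by norm_num
    rw [hdr0, List.drop_zero, wordM, wordList_eq, hΩi]
    have hLpos : 0 < ((SA wi : ℤ) - (-1)).toNat := by omega
    rw [map_range_cons _ _ hLpos]
    have hBc : (List.range dj).map fB = fB 0 :: (List.range (dj-1)).map (fun s => fB (s+1)) :=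
      map_range_cons fB dj (by omega)
    rw [hBc]
    simp only [List.cons_append]
    apply List.Lex.rel
    have hsc : Sc S n ((-1 : ℤ) + (0 : ℕ)) = 0 := by
      have h : ¬((0:ℤ) ≤ (-1 : ℤ) + ((0:ℕ) : ℤ) ∧ ((-1 : ℤ) + ((0:ℕ) : ℤ)) < (n:ℤ)) := by
        omega
      rw [Sc, if_neg h]
    rw [hsc]
    simp only [hfB]
    have : 0 < S (j + 0) := hS.2 _ (by omega)
    exact_mod_cast this
  · -- i < n
    have hiltn : i < n := lt_of_le_of_ne hin hi_n
    have hposi : posZ n i = (i : ℤ) := by simp [posZ, hi_n]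
    have hSAwin : SA wi ≤ n := hmap wi (by omega)
    have hdi1 : i < SA wi := by
      have := hii.2; rw [hposi] at this; omega
    set di : ℕ := SA wi - i with hdidef
    have hΩi : Omega SA k wi ≤ (i : ℤ) := by rw [← hposi]; exact hii.1
    have Ri : (wordM S n SA k wi).drop (posZ n i - Omega SA k wi).toNat =
        (List.range di).map (fun s => (S (i + s) : ℤ)) ++ [(wi : ℤ) - (k + 1)] := by
      rw [hposi]; exact wordM_drop S n SA k wi i hΩi hdi1 hSAwin
    rw [Ri]
    set fA : ℕ → ℤ := fun s => (S (i + s) : ℤ) with hfA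
    by_cases hdisc : ∀ b, b < min di dj → S (i + b) = S (j + b)
    · -- no discrepancy before the shorter end
      rcases lt_trichotomy di dj with hlt' | heq' | hgt'
      · -- di < dj : marker of i comes first
        have hpre : (List.range di).map fA = (List.range di).map fB := by
          apply List.map_congr_left
          intro b hb
          have hb' : b < di := List.mem_range.1 hb
          simp only [hfA, hfB]
          exact_mod_cast hdisc b (by omega)
        rw [map_range_split fB dj di (le_of_lt hlt'), List.append_assoc, hpre]
        apply lex_append
        rw [map_range_cons (fun s => fB (di + s)) (dj - di) (by omega)]
        simp only [List.cons_append]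
        apply List.Lex.rel
        have : (0:ℤ) ≤ fB (di + 0) := by simp only [hfB]; positivity
        have hwik : (wi : ℤ) - (k+1) < 0 := by
          have : wi ≤ k := hwi; omega
        omega
      · -- di = dj : tie, markers decide; need wi < wj
        have hpre : (List.range di).map fA = (List.range dj).map fB := by
          rw [← heq']
          apply List.map_congr_left
          intro b hb
          have hb' : b < di := List.mem_range.1 hb
          simp only [hfA, hfB]
          exact_mod_cast hdisc b (by omega)
        rw [hpre]
        apply lex_append
        have hwiwj : wi < wj := by
          have h0 : List.Lex (· < ·) (sfx S n (i + di)) (sfx S n (j + di)) :=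
            (sfx_strip S n di i j (by omega) (by omega)
              (fun b hb => hdisc b (by omega))).mp hlt
          have e1 : i + di = SA wi := by omega
          have e2 : j + di = SA wj := by omega
          rw [e1, e2] at h0
          exact reflect wi wj (by omega) (by omega) h0
        apply List.Lex.rel
        omega
      · -- dj < di : impossible
        exfalso
        have h0 : List.Lex (· < ·) (sfx S n (i + dj)) (sfx S n (j + dj)) :=
          (sfx_strip S n dj i j (by omega) (by omega)
            (fun b hb => hdisc b (by omega))).mp hlt
        have hidjn : i + dj ≤ n := by omega
        obtain ⟨t, ht, hSAt⟩ := hSA.1.2.2 (Set.mem_Iic.2 hidjn)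
        rw [Set.mem_Iic] at ht
        have e2 : j + dj = SA wj := by omega
        rw [← hSAt, e2] at h0
        have htwj : t < wj := reflect t wj ht (by omega) h0
        have hge : (SA t : ℤ) ≤ Omega SA k wi :=
          omega_ge SA k wi t (by omega) (by omega)
        omega
    · -- first discrepancy before both ends : it must favour i
      push_neg at hdisc
      have hex : ∃ b, b < min di dj ∧ S (i + b) ≠ S (j + b) := hdisc
      classical
      set b := Nat.find hex with hbdef
      obtain ⟨hbm, hbne⟩ := Nat.find_spec hex
      have hag_b : ∀ b' < b, S (i + b') = S (j + b') := by
        intro b' hb'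
        have := Nat.find_min hex hb'
        push_neg at this
        exact this (by omega)
      have h0 : List.Lex (· < ·) (sfx S n (i + b)) (sfx S n (j + b)) :=
        (sfx_strip S n b i j (by omega) (by omega) hag_b).mp hlt
      rw [sfx_cons S n (i+b) (by omega), sfx_cons S n (j+b) (by omega)] at h0
      have hSb : S (i + b) < S (j + b) := lex_head_lt h0 hbne
      have hpre : (List.range b).map fA = (List.range b).map fB := by
        apply List.map_congr_left
        intro b' hb'
        have : b' < b := List.mem_range.1 hb'
        simp only [hfA, hfB]
        exact_mod_cast hag_b b' this
      rw [map_range_split fA di b (by omega), map_range_split fB dj b (by omega),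
        List.append_assoc, List.append_assoc, hpre]
      apply lex_append
      rw [map_range_cons (fun s => fA (b + s)) (di - b) (by omega),
        map_range_cons (fun s => fB (b + s)) (dj - b) (by omega)]
      simp only [List.cons_append]
      apply List.Lex.rel
      show fA (b + 0) < fB (b + 0)
      simp only [hfA, hfB, Nat.add_zero]
      exact_mod_cast hSb
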